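/- Fisher inconsistency of separated router/query surrogates: assume conditions (N1), (Q1), (Q2), (P1), (P2). Then for every b ∈ (0, C) and every ε ∈ (0, C − b) there exists δ ∈ (0, b) such that, for the two-expert binary-advice cost table c₁₀ = b − δ, c₁₁ = C, c₂₀ = b, c₂₁ = b + ε: (i) the Bayes comparison of row minima prefers expert 1, i.e. min{b − δ, C} < min{b, b + ε}; (ii) F(b − δ, C) > F(b, b + ε); and (iii) the pointwise separated surrogate objective (t_r, t₁, t₂) ↦ Ψ₁(t_r)·[ν(b−δ)·G(t₁)·Φ₀(U(t₁)) + ν(C)·G(t₁)·Φ₁(U(t₁))] + Ψ₂(t_r)·[ν(b)·G(t₂)·Φ₀(U(t₂)) + ν(b+ε)·G(t₂)·Φ₁(U(t₂))] has a unique global minimizer (t_r*, t₁*, t₂*) ∈ ℝ³ and this minimizer satisfies t_r* > 0, so that under the decoding rule r = 1 + 1{t_r ≥ 0} the surrogate minimizer selects expert 2 while the Bayes-optimal expert is 1. -/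

import Mathlib

/-- Logistic envelope `Φ₀(u) = log(1 + e^{-u})`. -/
noncomputable def Phi0 (u : ℝ) : ℝ := Real.log (1 + Real.exp (-u))

/-- Logistic envelope `Φ₁(u) = log(1 + e^{u})`. -/
noncomputable def Phi1 (u : ℝ) : ℝ := Real.log (1 + Real.exp u)

/-- Row objective `t ↦ ν(u)·G(t)·Φ₀(U(t)) + ν(v)·G(t)·Φ₁(U(t))`. -/
noncomputable def rowObj (ν G U : ℝ → ℝ) (u v t : ℝ) : ℝ :=
  ν u * G t * Phi0 (U t) + ν v * G t * Phi1 (U t)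

/-- Expert summary `F(u,v) = inf_t rowObj ν G U u v t`. -/
noncomputable def expertSummary (ν G U : ℝ → ℝ) (u v : ℝ) : ℝ :=
  ⨅ t : ℝ, rowObj ν G U u v t

/-- Pointwise separated router/query surrogate objective on scores
`p = (t_r, t₁, t₂)` for the 2-expert binary-advice cost table `(c₁₀,c₁₁;c₂₀,c₂₁)`. -/
noncomputable def sepObj (Ψ₁ Ψ₂ ν G U : ℝ → ℝ) (c10 c11 c20 c21 : ℝ)
    (p : ℝ × ℝ × ℝ) : ℝ :=
  Ψ₁ p.1 * rowObj ν G U c10 c11 p.2.1 + Ψ₂ p.1 * rowObj ν G U c20 c21 p.2.2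

lemma phi0_pos (u : ℝ) : 0 < Phi0 u :=
  Real.log_pos (by have := Real.exp_pos (-u); linarith)

lemma phi1_pos (u : ℝ) : 0 < Phi1 u :=
  Real.log_pos (by have := Real.exp_pos u; linarith)

lemma continuous_phi0 : Continuous Phi0 := by
  apply Continuous.log (continuous_const.add (Real.continuous_exp.comp continuous_neg))
  intro u; have := Real.exp_pos (-u); dsimp; positivity

lemma continuous_phi1 : Continuous Phi1 := by
  apply Continuous.log (continuous_const.add Real.continuous_exp)
  intro u; have := Real.exp_pos u; exact (by positivity : (0:ℝ) < 1 + Real.exp u).ne'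

lemma rowObj_continuous (ν G U : ℝ → ℝ) (hG : Continuous G) (hU : Continuous U)
    (u v : ℝ) : Continuous (fun t => rowObj ν G U u v t) := by
  unfold rowObj
  exact ((continuous_const.mul hG).mul (continuous_phi0.comp hU)).add
    ((continuous_const.mul hG).mul (continuous_phi1.comp hU))

lemma min_unique {f : ℝ → ℝ} (hconv : StrictConvexOn ℝ Set.univ f)
    {x y : ℝ} (hx : ∀ t, f x ≤ f t) (hy : ∀ t, f y ≤ f t) : x = y := by
  by_contra hne
  have h := hconv.2 (Set.mem_univ x) (Set.mem_univ y) hne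
    (by norm_num : (0:ℝ) < 1/2) (by norm_num : (0:ℝ) < 1/2) (by norm_num)
  have hxy : f x = f y := le_antisymm (hx y) (hy x)
  rw [smul_eq_mul, smul_eq_mul, smul_eq_mul, smul_eq_mul] at h
  have := hx ((1/2)*x + (1/2)*y)
  linarith

set_option maxHeartbeats 1000000 in
/-- **Fisher inconsistency of separated router/query surrogates.**
Under (N1), (Q1), (Q2), (P1), (P2): for every `b ∈ (0,C)` and `ε ∈ (0,C−b)` there is
`δ ∈ (0,b)` such that for the cost table `c₁₀ = b−δ, c₁₁ = C, c₂₀ = b, c₂₁ = b+ε`: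
(i) the Bayes comparison of row minima prefers expert 1;
(ii) `F(b−δ,C) > F(b,b+ε)`;
(iii) the pointwise separated surrogate objective has a unique global minimizer
`(t_r*, t₁*, t₂*)` with `t_r* > 0`, so under the decoding rule `r = 1 + 1{t_r ≥ 0}`
the surrogate minimizer selects expert 2 while the Bayes-optimal expert is 1. -/
theorem fisher_inconsistency_separated_surrogates
    (C : ℝ) (hC : 0 < C)
    -- (N1)
    (ν ν' : ℝ → ℝ)
    (hνcont : ContinuousOn ν (Set.Icc 0 C))
    (hνpos : ∀ u ∈ Set.Icc 0 C, 0 < ν u)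
    (hνderiv : ∀ u ∈ Set.Ioo 0 C, HasDerivAt ν (ν' u) u)
    (hν'pos : ∀ u ∈ Set.Ioo 0 C, 0 < ν' u)
    -- (Q1)
    (G U : ℝ → ℝ)
    (hGcont : Continuous G) (hGpos : ∀ t, 0 < G t)
    (hUcont : Continuous U) (hUmono : StrictMono U) (hUsurj : Function.Surjective U)
    -- (Q2)
    (hQ2 : ∀ u ∈ Set.Icc 0 C, ∀ v ∈ Set.Icc 0 C, ¬(u = 0 ∧ v = 0) →
      Filter.Tendsto (fun t => rowObj ν G U u v t) (Filter.cocompact ℝ) Filter.atTop ∧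
      StrictConvexOn ℝ Set.univ (fun t => rowObj ν G U u v t))
    -- (P1)
    (Ψ₁ Ψ₂ Ψ₁' Ψ₂' Ψ₁'' Ψ₂'' : ℝ → ℝ)
    (hΨ₁d : ∀ t, HasDerivAt Ψ₁ (Ψ₁' t) t) (hΨ₁d2 : ∀ t, HasDerivAt Ψ₁' (Ψ₁'' t) t)
    (hΨ₂d : ∀ t, HasDerivAt Ψ₂ (Ψ₂' t) t) (hΨ₂d2 : ∀ t, HasDerivAt Ψ₂' (Ψ₂'' t) t)
    (hΨ₁''cont : Continuous Ψ₁'') (hΨ₂''cont : Continuous Ψ₂'')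
    (hΨ₁pos : ∀ t, 0 < Ψ₁ t) (hΨ₂pos : ∀ t, 0 < Ψ₂ t)
    (hΨ₁'neg : ∀ t, Ψ₁' t < 0) (hΨ₂'pos : ∀ t, 0 < Ψ₂' t)
    (hΨ₁''pos : ∀ t, 0 < Ψ₁'' t) (hΨ₂''pos : ∀ t, 0 < Ψ₂'' t)
    -- (P2)
    (hρanti : StrictAnti (fun t => -Ψ₁' t / Ψ₂' t))
    (hρrange : Set.range (fun t => -Ψ₁' t / Ψ₂' t) = Set.Ioi (0 : ℝ))
    (hρ0 : -Ψ₁' 0 / Ψ₂' 0 = 1) :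
    ∀ b ∈ Set.Ioo (0 : ℝ) C, ∀ ε ∈ Set.Ioo (0 : ℝ) (C - b),
      ∃ δ ∈ Set.Ioo (0 : ℝ) b,
        -- (i) Bayes prefers expert 1
        (min (b - δ) C < min b (b + ε)) ∧
        -- (ii) profiled-summary reversal
        (expertSummary ν G U b (b + ε) < expertSummary ν G U (b - δ) C) ∧
        -- (iii) unique global minimizer with positive router score
        (∃ m : ℝ × ℝ × ℝ, 0 < m.1 ∧
          (∀ p : ℝ × ℝ × ℝ,
            sepObj Ψ₁ Ψ₂ ν G U (b - δ) C b (b + ε) m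
              ≤ sepObj Ψ₁ Ψ₂ ν G U (b - δ) C b (b + ε) p) ∧
          (∀ m' : ℝ × ℝ × ℝ,
            (∀ p : ℝ × ℝ × ℝ,
              sepObj Ψ₁ Ψ₂ ν G U (b - δ) C b (b + ε) m'
                ≤ sepObj Ψ₁ Ψ₂ ν G U (b - δ) C b (b + ε) p) → m' = m)) := by
  intro b hb ε hε
  obtain ⟨hb0, hbC⟩ := hb
  obtain ⟨hε0, hεC⟩ := hε
  have hbI : b ∈ Set.Icc (0:ℝ) C := ⟨hb0.le, hbC.le⟩
  have hbεI : b + ε ∈ Set.Icc (0:ℝ) C := ⟨by linarith, by linarith⟩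
  have hCI : C ∈ Set.Icc (0:ℝ) C := ⟨hC.le, le_refl C⟩
  -- strict monotonicity of ν on [0,C]
  have hmono : StrictMonoOn ν (Set.Icc 0 C) := by
    apply strictMonoOn_of_deriv_pos (convex_Icc 0 C) hνcont
    intro x hx
    rw [interior_Icc] at hx
    rw [(hνderiv x hx).deriv]
    exact hν'pos x hx
  -- package: unique minimizer and value of expertSummary
  have pack : ∀ u v : ℝ, u ∈ Set.Icc 0 C → v ∈ Set.Icc 0 C → 0 < u →
      ∃ t0 : ℝ, (∀ t, rowObj ν G U u v t0 ≤ rowObj ν G U u v t) ∧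
        (∀ t', (∀ t, rowObj ν G U u v t' ≤ rowObj ν G U u v t) → t' = t0) ∧
        expertSummary ν G U u v = rowObj ν G U u v t0 ∧
        0 < rowObj ν G U u v t0 := by
    intro u v hu hv hu0
    obtain ⟨hcoer, hconv⟩ := hQ2 u hu v hv (fun h => hu0.ne' h.1)
    obtain ⟨t0, ht0⟩ :=
      (rowObj_continuous ν G U hGcont hUcont u v).exists_forall_le hcoer
    refine ⟨t0, ht0, fun t' ht' => min_unique hconv ht' ht0, ?_, ?_⟩
    · refine le_antisymm (ciInf_le ⟨rowObj ν G U u v t0, ?_⟩ t0) (le_ciInf ht0)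
      rintro x ⟨t, rfl⟩; exact ht0 t
    · unfold rowObj
      have h1 := mul_pos (mul_pos (hνpos u hu) (hGpos t0)) (phi0_pos (U t0))
      have h2 := mul_pos (mul_pos (hνpos v hv) (hGpos t0)) (phi1_pos (U t0))
      linarith
  -- the reference minima
  obtain ⟨t2, hmin2, huniq2, hF2, hpos2⟩ := pack b (b + ε) hbI hbεI hb0
  obtain ⟨tC, hminC, _, _, hposC⟩ := pack b C hbI hCI hb0
  set m2 : ℝ := rowObj ν G U b (b + ε) t2 with hm2def
  set M : ℝ := rowObj ν G U b C tC with hMdef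
  -- m2 < M
  have hνbε : ν (b + ε) < ν C := hmono hbεI hCI (by linarith)
  have hm2M : m2 < M := by
    have h1 : m2 ≤ rowObj ν G U b (b + ε) tC := hmin2 tC
    have h2 : rowObj ν G U b (b + ε) tC < M := by
      rw [hMdef]; unfold rowObj
      have := mul_pos (hGpos tC) (phi1_pos (U tC))
      nlinarith
    linarith
  have hνb : 0 < ν b := hνpos b hbI
  -- choose δ
  set η : ℝ := ν b * (M - m2) / M with hηdef
  have hηpos : 0 < η := by
    apply div_pos (mul_pos hνb (by linarith)) (by linarith)
  have hνcontat : ContinuousAt ν b := (hνderiv b ⟨hb0, hbC⟩).continuousAt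
  obtain ⟨δ₀, hδ₀pos, hδ₀⟩ := Metric.continuousAt_iff.mp hνcontat η hηpos
  set δ : ℝ := min (δ₀ / 2) (b / 2) with hδdef
  have hδpos : 0 < δ := lt_min (by linarith) (by linarith)
  have hδltb : δ < b := lt_of_le_of_lt (min_le_right _ _) (by linarith)
  have hδI : δ ∈ Set.Ioo (0:ℝ) b := ⟨hδpos, hδltb⟩
  have hbδI : b - δ ∈ Set.Icc (0:ℝ) C := ⟨by linarith, by linarith⟩
  have hbδ0 : 0 < b - δ := by linarith
  set a : ℝ := ν b - ν (b - δ) with hadef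
  have ha0 : 0 ≤ a := by
    have := (hmono hbδI hbI (by linarith)).le
    rw [hadef]; linarith
  have haη : a < η := by
    have hd : dist (b - δ) b < δ₀ := by
      rw [Real.dist_eq]
      have : |b - δ - b| = δ := by rw [show b - δ - b = -δ by ring, abs_neg, abs_of_pos hδpos]
      rw [this]
      exact lt_of_le_of_lt (min_le_left _ _) (by linarith)
    have := hδ₀ hd
    rw [Real.dist_eq] at this
    have := abs_lt.mp this
    rw [hadef]; linarith [this.1, this.2]
  -- key lower bound for rowObj (b-δ) C
  have hfrac : a / ν b < (M - m2) / M := by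
    rw [hηdef] at haη
    rw [div_lt_div_iff₀ hνb (by linarith : (0:ℝ) < M)]
    calc a * M < ν b * (M - m2) / M * M := by
          exact mul_lt_mul_of_pos_right haη (by linarith)
      _ = (M - m2) * ν b := by field_simp
  have hfrac1 : a / ν b < 1 := lt_of_lt_of_le hfrac (by
    rw [div_le_one (by linarith : (0:ℝ) < M)]; linarith)
  have hfrac0 : 0 ≤ a / ν b := div_nonneg ha0 hνb.le
  have hkey : ∀ t, (1 - a / ν b) * M ≤ rowObj ν G U (b - δ) C t := by
    intro t
    have hGΦ : 0 ≤ G t * Phi0 (U t) :=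
      (mul_pos (hGpos t) (phi0_pos (U t))).le
    have hrw : rowObj ν G U (b - δ) C t = rowObj ν G U b C t - a * (G t * Phi0 (U t)) := by
      unfold rowObj; rw [hadef]; ring
    have hlb : ν b * (G t * Phi0 (U t)) ≤ rowObj ν G U b C t := by
      unfold rowObj
      have := mul_pos (mul_pos (hνpos C hCI) (hGpos t)) (phi1_pos (U t))
      nlinarith
    have hMle : M ≤ rowObj ν G U b C t := hminC t
    have hRpos : 0 ≤ rowObj ν G U b C t := le_trans hposC.le hMle
    have habd : a * (G t * Phi0 (U t)) ≤ (a / ν b) * rowObj ν G U b C t := by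
      calc a * (G t * Phi0 (U t)) = (a / ν b) * (ν b * (G t * Phi0 (U t))) := by
            field_simp
        _ ≤ (a / ν b) * rowObj ν G U b C t :=
            mul_le_mul_of_nonneg_left hlb hfrac0
    calc (1 - a / ν b) * M ≤ (1 - a / ν b) * rowObj ν G U b C t :=
          mul_le_mul_of_nonneg_left hMle (by linarith)
      _ = rowObj ν G U b C t - (a / ν b) * rowObj ν G U b C t := by ring
      _ ≤ rowObj ν G U (b - δ) C t := by rw [hrw]; linarith
  have hkeym2 : m2 < (1 - a / ν b) * M := by
    have : (a / ν b) * M < M - m2 := by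
      have := mul_lt_mul_of_pos_right hfrac (by linarith : (0:ℝ) < M)
      rw [div_mul_cancel₀ (M - m2) (by linarith : M ≠ 0)] at this
      exact this
    nlinarith
  clear_value m2 M
  -- minimum for row (b-δ, C)
  obtain ⟨t1, hmin1, huniq1, hF1, hpos1⟩ := pack (b - δ) C hbδI hCI hbδ0
  set m1 : ℝ := rowObj ν G U (b - δ) C t1 with hm1def
  have hm2m1 : m2 < m1 := lt_of_lt_of_le hkeym2 (hkey t1)
  clear_value m1
  refine ⟨δ, hδI, ?_, ?_, ?_⟩
  · -- (i)
    rw [min_eq_left (by linarith : b - δ ≤ C), min_eq_left (by linarith : b ≤ b + ε)]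
    linarith
  · -- (ii)
    rw [hF2, hF1]; exact hm2m1
  · -- (iii)
    set g : ℝ → ℝ := fun t => Ψ₁ t * m1 + Ψ₂ t * m2 with hgdef
    have hgd : ∀ t, HasDerivAt g (Ψ₁' t * m1 + Ψ₂' t * m2) t := fun t =>
      ((hΨ₁d t).mul_const m1).add ((hΨ₂d t).mul_const m2)
    set g' : ℝ → ℝ := fun t => Ψ₁' t * m1 + Ψ₂' t * m2 with hg'def
    have hg'mono : StrictMono g' := by
      apply strictMono_of_deriv_pos
      intro x
      have hd : HasDerivAt g' (Ψ₁'' x * m1 + Ψ₂'' x * m2) x :=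
        ((hΨ₁d2 x).mul_const m1).add ((hΨ₂d2 x).mul_const m2)
      rw [hd.deriv]
      exact add_pos (mul_pos (hΨ₁''pos x) (lt_trans hpos2 hm2m1))
        (mul_pos (hΨ₂''pos x) hpos2)
    -- find the router critical point
    have hmem : m2 / m1 ∈ Set.range (fun t => -Ψ₁' t / Ψ₂' t) := by
      rw [hρrange]
      exact Set.mem_Ioi.mpr (div_pos hpos2 (lt_trans hpos2 hm2m1))
    obtain ⟨tr, htr⟩ := hmem
    have hm1pos : 0 < m1 := lt_trans hpos2 hm2m1
    have hlt1 : m2 / m1 < 1 := (div_lt_one hm1pos).mpr hm2m1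
    have htr0 : 0 < tr := by
      by_contra h
      push_neg at h
      rcases h.lt_or_eq with h' | h'
      · have := hρanti h'
        simp only at this htr
        rw [htr, hρ0] at this
        linarith
      · rw [h'] at htr
        simp only at htr
        rw [hρ0] at htr
        linarith
    have hg'tr : g' tr = 0 := by
      simp only at htr
      have h2 := (hΨ₂'pos tr).ne'
      have hm1ne := hm1pos.ne'
      field_simp [h2, hm1ne] at htr
      show Ψ₁' tr * m1 + Ψ₂' tr * m2 = 0
      linear_combination -htr
    -- g has a strict global minimum at tr
    have hgcont : Continuous g :=
      continuous_iff_continuousAt.mpr (fun t => (hgd t).continuousAt)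
    have hgmonoIci : StrictMonoOn g (Set.Ici tr) := by
      apply strictMonoOn_of_deriv_pos (convex_Ici tr) hgcont.continuousOn
      intro x hx
      rw [interior_Ici] at hx
      rw [(hgd x).deriv]
      have := hg'mono (Set.mem_Ioi.mp hx)
      rw [hg'tr] at this
      exact this
    have hgantiIic : StrictAntiOn g (Set.Iic tr) := by
      apply strictAntiOn_of_deriv_neg (convex_Iic tr) hgcont.continuousOn
      intro x hx
      rw [interior_Iic] at hx
      rw [(hgd x).deriv]
      have := hg'mono (Set.mem_Iio.mp hx)
      rw [hg'tr] at this
      exact this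
    have hgstrict : ∀ t, t ≠ tr → g tr < g t := by
      intro t ht
      rcases lt_or_gt_of_ne ht with h | h
      · exact hgantiIic h.le (le_refl tr) h
      · exact hgmonoIci (le_refl tr) h.le h
    have hgle : ∀ t, g tr ≤ g t := by
      intro t
      by_cases h : t = tr
      · rw [h]
      · exact (hgstrict t h).le
    -- assemble
    refine ⟨(tr, t1, t2), htr0, ?_, ?_⟩
    · intro p
      have h1 : sepObj Ψ₁ Ψ₂ ν G U (b - δ) C b (b + ε) (tr, t1, t2) = g tr := by
        simp only [sepObj, hgdef, hm1def, hm2def]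
      have h2 : g p.1 ≤ sepObj Ψ₁ Ψ₂ ν G U (b - δ) C b (b + ε) p := by
        unfold sepObj
        exact add_le_add
          (mul_le_mul_of_nonneg_left (hmin1 p.2.1) (hΨ₁pos p.1).le)
          (mul_le_mul_of_nonneg_left (hmin2 p.2.2) (hΨ₂pos p.1).le)
      rw [h1]
      exact le_trans (hgle p.1) h2
    · rintro ⟨x, y, z⟩ hm'
      have h1 : sepObj Ψ₁ Ψ₂ ν G U (b - δ) C b (b + ε) (x, y, z) ≤ g tr := by
        have := hm' (tr, t1, t2)
        simpa only [sepObj, hgdef, hm1def, hm2def] using this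
      have h2 : g x ≤ sepObj Ψ₁ Ψ₂ ν G U (b - δ) C b (b + ε) (x, y, z) := by
        unfold sepObj
        exact add_le_add
          (mul_le_mul_of_nonneg_left (hmin1 y) (hΨ₁pos x).le)
          (mul_le_mul_of_nonneg_left (hmin2 z) (hΨ₂pos x).le)
      have hx : x = tr := by
        by_contra h
        have := hgstrict x h
        linarith
      subst hx
      -- equality of row values
      have hA : m1 ≤ rowObj ν G U (b - δ) C y := hmin1 y
      have hB : m2 ≤ rowObj ν G U b (b + ε) z := hmin2 z
      have hP1 := hΨ₁pos x
      have hP2 := hΨ₂pos x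
      have hsum : Ψ₁ x * rowObj ν G U (b - δ) C y + Ψ₂ x * rowObj ν G U b (b + ε) z
          ≤ Ψ₁ x * m1 + Ψ₂ x * m2 := h1
      have hA' : Ψ₁ x * m1 ≤ Ψ₁ x * rowObj ν G U (b - δ) C y :=
        mul_le_mul_of_nonneg_left hA hP1.le
      have hB' : Ψ₂ x * m2 ≤ Ψ₂ x * rowObj ν G U b (b + ε) z :=
        mul_le_mul_of_nonneg_left hB hP2.le
      have e1' : Ψ₁ x * rowObj ν G U (b - δ) C y = Ψ₁ x * m1 :=
        le_antisymm (by linarith) hA'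
      have e2' : Ψ₂ x * rowObj ν G U b (b + ε) z = Ψ₂ x * m2 :=
        le_antisymm (by linarith) hB'
      have he1 : rowObj ν G U (b - δ) C y = m1 := mul_left_cancel₀ hP1.ne' e1'
      have he2 : rowObj ν G U b (b + ε) z = m2 := mul_left_cancel₀ hP2.ne' e2'
      have hy : y = t1 := huniq1 y (fun t => he1 ▸ hmin1 t)
      have hz : z = t2 := huniq2 z (fun t => he2 ▸ hmin2 t)
      rw [hy, hz]
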